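/- arXiv:1302.4587 — 4 statements merged into one kernel-verified Lean document; each statement's English description precedes it below -/
import Mathlib

section
/- Let G be a finite simple graph with m ≥ 1 edges. If the edge weights induce a uniformly random linear order on E(G) (equivalently, the ranking of edges is a uniformly random bijection E(G) → {1,…,m}), then the expected number of removed edges satisfies E[|R|] ≥ m/2, where R is the set of edges sharing at least one endpoint with some locally maximal edge (including the locally maximal edges themselves). -/
open Classical

/-- Two edges of a graph share an endpoint. -/
def shareEndpoint {V : Type*} (e f : Sym2 V) : Prop := ∃ v, v ∈ e ∧ v ∈ f

variable {V : Type*} [Fintype V] [DecidableEq V]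

/-- The sample space of the random model: uniformly random bijections
(rankings) from the edge set `E(G)` to `{1, …, m}`, represented as
equivalences `E(G) ≃ Fin m`. -/
abbrev EdgeRanking (G : SimpleGraph V) [DecidableRel G.Adj] : Type _ :=
  {e : Sym2 V // e ∈ G.edgeFinset} ≃ Fin G.edgeFinset.card

/-- The rank of an edge under a ranking (arbitrary value on non-edges). -/
noncomputable def rk (G : SimpleGraph V) [DecidableRel G.Adj] (σ : EdgeRanking G)
    (e : Sym2 V) : ℕ :=
  if h : e ∈ G.edgeFinset then (σ ⟨e, h⟩ : ℕ) else 0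

/-- An edge `e` of `G` is locally maximal under the ranking `σ`: its rank is
larger than the rank of any other edge sharing an endpoint with it. -/
def locMaxR (G : SimpleGraph V) [DecidableRel G.Adj] (σ : EdgeRanking G)
    (e : Sym2 V) : Prop :=
  e ∈ G.edgeFinset ∧ ∀ f ∈ G.edgeFinset, f ≠ e → shareEndpoint e f → rk G σ f < rk G σ e

/-- The removed set `R`: all edges sharing at least one endpoint with some locally
maximal edge (including the locally maximal edges themselves). -/
noncomputable def removedR (G : SimpleGraph V) [DecidableRel G.Adj] (σ : EdgeRanking G) :
    Finset (Sym2 V) :=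
  G.edgeFinset.filter (fun f => ∃ e, locMaxR G σ e ∧ shareEndpoint e f)

/-! ### Auxiliary material -/

lemma shareEndpoint_symm {e f : Sym2 V} (h : shareEndpoint e f) : shareEndpoint f e := by
  obtain ⟨v, hv1, hv2⟩ := h; exact ⟨v, hv2, hv1⟩

lemma shareEndpoint_refl (e : Sym2 V) : shareEndpoint e e := by
  induction e using Sym2.ind with
  | _ x y => exact ⟨x, Sym2.mem_mk_left x y, Sym2.mem_mk_left x y⟩

variable (G : SimpleGraph V) [DecidableRel G.Adj]

/-- The closed neighborhood of an edge: all edges sharing an endpoint with it. -/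
noncomputable def nbr (e : Sym2 V) : Finset (Sym2 V) :=
  G.edgeFinset.filter (fun f => shareEndpoint e f)

lemma mem_nbr_self {e : Sym2 V} (he : e ∈ G.edgeFinset) : e ∈ nbr G e := by
  simp [nbr, he, shareEndpoint_refl]

lemma nbr_subset (e : Sym2 V) : nbr G e ⊆ G.edgeFinset := Finset.filter_subset _ _

lemma rk_mk (σ : EdgeRanking G) (x : {e : Sym2 V // e ∈ G.edgeFinset}) :
    rk G σ x.1 = σ x := by
  unfold rk
  rw [dif_pos x.2]

lemma rk_injOn (σ : EdgeRanking G) {e f : Sym2 V} (he : e ∈ G.edgeFinset)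
    (hf : f ∈ G.edgeFinset) (h : rk G σ e = rk G σ f) : e = f := by
  have h1 : rk G σ (⟨e, he⟩ : {x : Sym2 V // x ∈ G.edgeFinset}).1 = σ ⟨e, he⟩ := rk_mk G σ _
  have h2 : rk G σ (⟨f, hf⟩ : {x : Sym2 V // x ∈ G.edgeFinset}).1 = σ ⟨f, hf⟩ := rk_mk G σ _
  have : σ ⟨e, he⟩ = σ ⟨f, hf⟩ := by
    apply Fin.ext
    simpa [← h1, ← h2] using h
  simpa using σ.injective this

/-- Locally maximal edges form a matching. -/
lemma locMax_not_share (σ : EdgeRanking G) {e₁ e₂ : Sym2 V}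
    (h1 : locMaxR G σ e₁) (h2 : locMaxR G σ e₂) (hne : e₁ ≠ e₂) :
    ¬ shareEndpoint e₁ e₂ := fun hs =>
  lt_asymm (h1.2 e₂ h2.1 (Ne.symm hne) hs) (h2.2 e₁ h1.1 hne (shareEndpoint_symm hs))

/-- Any edge shares an endpoint with at most two locally maximal edges. -/
lemma card_locMax_sharing_le_two (σ : EdgeRanking G) (f : Sym2 V) :
    (((G.edgeFinset.filter (locMaxR G σ))).filter (fun e => shareEndpoint e f)).card ≤ 2 := by
  induction f using Sym2.ind with
  | _ u v =>
    set T := ((G.edgeFinset.filter (locMaxR G σ))).filter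
      (fun e => shareEndpoint e (s(u, v))) with hT
    have hmem : ∀ e ∈ T, (if u ∈ e then u else v) ∈ e := by
      intro e he
      rw [hT, Finset.mem_filter] at he
      by_cases hu : u ∈ e
      · simpa [hu] using hu
      · obtain ⟨x, hx1, hx2⟩ := he.2
        rw [Sym2.mem_iff] at hx2
        rcases hx2 with rfl | rfl
        · exact absurd hx1 hu
        · simpa [hu] using hx1
    have hloc : ∀ e ∈ T, locMaxR G σ e := by
      intro e he
      rw [hT, Finset.mem_filter, Finset.mem_filter] at he
      exact he.1.2
    have hcard : T.card ≤ ({u, v} : Finset V).card := by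
      apply Finset.card_le_card_of_injOn (fun e => if u ∈ e then u else v)
      · intro e he
        by_cases hu : u ∈ e <;> simp [hu]
      · intro e₁ h1 e₂ h2 heq
        by_contra hne
        apply locMax_not_share G σ (hloc e₁ h1) (hloc e₂ h2) hne
        have h2' := hmem e₂ h2
        change (if u ∈ e₁ then u else v) = (if u ∈ e₂ then u else v) at heq
        rw [← heq] at h2'
        exact ⟨_, hmem e₁ h1, h2'⟩
    calc T.card ≤ ({u, v} : Finset V).card := hcard
      _ ≤ 2 := by
          apply le_trans (Finset.card_insert_le _ _)
          simp

/-- Per ranking: the sum of closed-neighborhood sizes over locally maximal edges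
is at most twice the number of removed edges. -/
lemma sum_nbr_le (σ : EdgeRanking G) :
    ∑ e ∈ G.edgeFinset.filter (locMaxR G σ), (nbr G e).card
      ≤ 2 * (removedR G σ).card := by
  set M := G.edgeFinset.filter (locMaxR G σ) with hM
  have step1 : ∑ e ∈ M, (nbr G e).card
      = ∑ f ∈ G.edgeFinset, (M.filter (fun e => shareEndpoint e f)).card := by
    simp only [nbr, Finset.card_filter]
    rw [Finset.sum_comm]
  rw [step1]
  have step2 : ∑ f ∈ G.edgeFinset, (M.filter (fun e => shareEndpoint e f)).card
      = ∑ f ∈ removedR G σ, (M.filter (fun e => shareEndpoint e f)).card := by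
    symm
    apply Finset.sum_subset (Finset.filter_subset _ _)
    intro f hf hnf
    rw [Finset.card_eq_zero, Finset.filter_eq_empty_iff]
    intro e he hs
    rw [hM, Finset.mem_filter] at he
    exact hnf (Finset.mem_filter.mpr ⟨hf, ⟨e, he.2, hs⟩⟩)
  rw [step2]
  calc ∑ f ∈ removedR G σ, (M.filter (fun e => shareEndpoint e f)).card
      ≤ ∑ _f ∈ removedR G σ, 2 :=
        Finset.sum_le_sum fun f _ => card_locMax_sharing_le_two G σ f
    _ = 2 * (removedR G σ).card := by rw [Finset.sum_const, smul_eq_mul, mul_comm]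

/-- The set of rankings under which `τ` is the strict maximum of `nbr G e`. -/
noncomputable def Bset (e τ : Sym2 V) : Finset (EdgeRanking G) :=
  Finset.univ.filter (fun σ => ∀ g ∈ nbr G e, g ≠ τ → rk G σ g < rk G σ τ)

lemma Bset_card_eq {e τ₁ τ₂ : Sym2 V} (h1 : τ₁ ∈ nbr G e) (h2 : τ₂ ∈ nbr G e) :
    (Bset G e τ₁).card = (Bset G e τ₂).card := by
  have h1E : τ₁ ∈ G.edgeFinset := nbr_subset G e h1
  have h2E : τ₂ ∈ G.edgeFinset := nbr_subset G e h2
  set a : {x : Sym2 V // x ∈ G.edgeFinset} := ⟨τ₁, h1E⟩ with ha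
  set b : {x : Sym2 V // x ∈ G.edgeFinset} := ⟨τ₂, h2E⟩ with hb
  have key : ∀ {ρ₁ ρ₂ : Sym2 V} (k1 : ρ₁ ∈ nbr G e) (k2 : ρ₂ ∈ nbr G e)
      (σ : EdgeRanking G), σ ∈ Bset G e ρ₁ →
      (Equiv.swap (⟨ρ₁, nbr_subset G e k1⟩ : {x : Sym2 V // x ∈ G.edgeFinset})
        ⟨ρ₂, nbr_subset G e k2⟩).trans σ ∈ Bset G e ρ₂ := by
    intro ρ₁ ρ₂ k1 k2 σ hσ
    set p : {x : Sym2 V // x ∈ G.edgeFinset} := ⟨ρ₁, nbr_subset G e k1⟩ with hp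
    set q : {x : Sym2 V // x ∈ G.edgeFinset} := ⟨ρ₂, nbr_subset G e k2⟩ with hq
    rw [Bset, Finset.mem_filter] at hσ ⊢
    refine ⟨Finset.mem_univ _, ?_⟩
    by_cases hpq : ρ₁ = ρ₂
    · subst hpq
      intro g hg hgn
      have := hσ.2 g hg hgn
      have hgx : rk G ((Equiv.swap p q).trans σ) g = rk G σ g := by
        have hgE := nbr_subset G e hg
        have e1 : rk G ((Equiv.swap p q).trans σ) g =
            ((Equiv.swap p q).trans σ) ⟨g, hgE⟩ := rk_mk G _ ⟨g, hgE⟩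
        have e2 : rk G σ g = σ ⟨g, hgE⟩ := rk_mk G σ ⟨g, hgE⟩
        rw [e1, e2]
        simp [Equiv.swap_self, show q = p from rfl]
      have hρx : rk G ((Equiv.swap p q).trans σ) ρ₁ = rk G σ ρ₁ := by
        have e1 : rk G ((Equiv.swap p q).trans σ) ρ₁ =
            ((Equiv.swap p q).trans σ) p := rk_mk G _ p
        have e2 : rk G σ ρ₁ = σ p := rk_mk G σ p
        rw [e1, e2]
        simp [Equiv.swap_self, show q = p from rfl]
      rw [hgx, hρx]
      exact this
    · have hpqne : p ≠ q := fun h => hpq (congrArg Subtype.val h)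
      have rkswap : ∀ (x : {y : Sym2 V // y ∈ G.edgeFinset}),
          rk G ((Equiv.swap p q).trans σ) x.1 = σ ((Equiv.swap p q) x) := by
        intro x
        rw [rk_mk G _ x]
        rfl
      have rρ₂ : rk G ((Equiv.swap p q).trans σ) ρ₂ = rk G σ ρ₁ := by
        have := rkswap q
        rw [Equiv.swap_apply_right] at this
        rw [this, rk_mk G σ p]
      have rρ₁ : rk G ((Equiv.swap p q).trans σ) ρ₁ = rk G σ ρ₂ := by
        have := rkswap p
        rw [Equiv.swap_apply_left] at this
        rw [this, rk_mk G σ q]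
      intro g hg hgρ₂
      by_cases hgρ₁ : g = ρ₁
      · subst hgρ₁
        rw [rρ₁, rρ₂]
        exact hσ.2 ρ₂ k2 (fun h => hpq h.symm)
      · have hgE := nbr_subset G e hg
        have hgp : (⟨g, hgE⟩ : {y : Sym2 V // y ∈ G.edgeFinset}) ≠ p :=
          fun h => hgρ₁ (congrArg Subtype.val h)
        have hgq : (⟨g, hgE⟩ : {y : Sym2 V // y ∈ G.edgeFinset}) ≠ q :=
          fun h => hgρ₂ (congrArg Subtype.val h)
        have rg : rk G ((Equiv.swap p q).trans σ) g = rk G σ g := by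
          have := rkswap ⟨g, hgE⟩
          rw [Equiv.swap_apply_of_ne_of_ne hgp hgq] at this
          rw [this, rk_mk G σ ⟨g, hgE⟩]
        rw [rg, rρ₂]
        exact hσ.2 g hg hgρ₁
  apply Finset.card_bij'
    (fun σ _ => (Equiv.swap a b).trans σ)
    (fun σ _ => (Equiv.swap b a).trans σ)
  · intro σ hσ
    exact key h1 h2 σ hσ
  · intro σ hσ
    exact key h2 h1 σ hσ
  · intro σ _
    apply Equiv.ext
    intro x
    simp [Equiv.swap_comm a b, Equiv.swap_apply_self]
  · intro σ _
    apply Equiv.ext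
    intro x
    simp [Equiv.swap_comm a b, Equiv.swap_apply_self]

lemma Bset_filter_eq {e : Sym2 V} (he : e ∈ G.edgeFinset) :
    (Finset.univ.filter (fun σ : EdgeRanking G => locMaxR G σ e)) = Bset G e e := by
  ext σ
  simp only [Bset, Finset.mem_filter, Finset.mem_univ, true_and]
  constructor
  · intro h g hg hgn
    rw [nbr, Finset.mem_filter] at hg
    exact h.2 g hg.1 hgn hg.2
  · intro h
    refine ⟨he, fun f hf hfn hs => h f ?_ hfn⟩
    rw [nbr, Finset.mem_filter]
    exact ⟨hf, hs⟩

lemma count_locMax {e : Sym2 V} (he : e ∈ G.edgeFinset) :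
    (nbr G e).card *
      (Finset.univ.filter (fun σ : EdgeRanking G => locMaxR G σ e)).card
      = Fintype.card (EdgeRanking G) := by
  have hdisj : ∀ τ₁ ∈ nbr G e, ∀ τ₂ ∈ nbr G e, τ₁ ≠ τ₂ →
      Disjoint (Bset G e τ₁) (Bset G e τ₂) := by
    intro τ₁ h1 τ₂ h2 hne
    rw [Finset.disjoint_left]
    intro σ hσ1 hσ2
    rw [Bset, Finset.mem_filter] at hσ1 hσ2
    exact lt_asymm (hσ1.2 τ₂ h2 (Ne.symm hne)) (hσ2.2 τ₁ h1 hne)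
  have hcover : (nbr G e).biUnion (Bset G e) = Finset.univ := by
    apply Finset.eq_univ_of_forall
    intro σ
    rw [Finset.mem_biUnion]
    obtain ⟨τ, hτ, hmax⟩ := Finset.exists_max_image (nbr G e) (rk G σ)
      ⟨e, mem_nbr_self G he⟩
    refine ⟨τ, hτ, ?_⟩
    rw [Bset, Finset.mem_filter]
    refine ⟨Finset.mem_univ _, fun g hg hgn => ?_⟩
    exact lt_of_le_of_ne (hmax g hg)
      (fun h => hgn (rk_injOn G σ (nbr_subset G e hg) (nbr_subset G e hτ) h))
  have hsum : ∑ τ ∈ nbr G e, (Bset G e τ).card = Fintype.card (EdgeRanking G) := by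
    rw [← Finset.card_biUnion hdisj, hcover, Finset.card_univ]
  rw [Bset_filter_eq G he]
  calc (nbr G e).card * (Bset G e e).card
      = ∑ _τ ∈ nbr G e, (Bset G e e).card := by rw [Finset.sum_const, smul_eq_mul]
    _ = ∑ τ ∈ nbr G e, (Bset G e τ).card :=
        Finset.sum_congr rfl fun τ hτ => Bset_card_eq G (mem_nbr_self G he) hτ
    _ = Fintype.card (EdgeRanking G) := hsum

/-- The main counting inequality, in ℕ. -/
lemma main_count :
    G.edgeFinset.card * Fintype.card (EdgeRanking G)
      ≤ 2 * ∑ σ : EdgeRanking G, (removedR G σ).card := by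
  have lhs_eq : ∑ σ : EdgeRanking G, ∑ e ∈ G.edgeFinset.filter (locMaxR G σ), (nbr G e).card
      = G.edgeFinset.card * Fintype.card (EdgeRanking G) := by
    have : ∀ σ : EdgeRanking G, ∑ e ∈ G.edgeFinset.filter (locMaxR G σ), (nbr G e).card
        = ∑ e ∈ G.edgeFinset, if locMaxR G σ e then (nbr G e).card else 0 := by
      intro σ
      rw [Finset.sum_filter]
    calc ∑ σ : EdgeRanking G, ∑ e ∈ G.edgeFinset.filter (locMaxR G σ), (nbr G e).card
        = ∑ σ : EdgeRanking G, ∑ e ∈ G.edgeFinset,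
            if locMaxR G σ e then (nbr G e).card else 0 := by
          exact Finset.sum_congr rfl fun σ _ => this σ
      _ = ∑ e ∈ G.edgeFinset, ∑ σ : EdgeRanking G,
            if locMaxR G σ e then (nbr G e).card else 0 := Finset.sum_comm
      _ = ∑ e ∈ G.edgeFinset, Fintype.card (EdgeRanking G) := by
          apply Finset.sum_congr rfl
          intro e he
          rw [← count_locMax G he, ← Finset.sum_filter, Finset.sum_const,
            smul_eq_mul, mul_comm]
      _ = G.edgeFinset.card * Fintype.card (EdgeRanking G) := by
          rw [Finset.sum_const, smul_eq_mul]
  rw [← lhs_eq, Finset.mul_sum]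
  exact Finset.sum_le_sum fun σ _ => sum_nbr_le G σ

/-- For a finite simple graph `G` with `m ≥ 1` edges, under a
uniformly random ranking of the edges, the expected number of removed edges is
at least `m / 2`. -/
theorem stmt0 (G : SimpleGraph V) [DecidableRel G.Adj] (hm : 1 ≤ G.edgeFinset.card) :
    (G.edgeFinset.card : ℝ) / 2 ≤
      (∑ σ : EdgeRanking G, ((removedR G σ).card : ℝ)) /
        (Fintype.card (EdgeRanking G) : ℝ) := by
  have hN : 0 < Fintype.card (EdgeRanking G) := by
    rw [Fintype.card_pos_iff]
    refine ⟨Fintype.equivFinOfCardEq ?_⟩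
    exact Fintype.card_coe _
  have hNR : (0 : ℝ) < (Fintype.card (EdgeRanking G) : ℝ) := by exact_mod_cast hN
  rw [div_le_div_iff₀ (by norm_num) hNR]
  have key := main_count G
  have : ((G.edgeFinset.card * Fintype.card (EdgeRanking G) : ℕ) : ℝ)
      ≤ ((2 * ∑ σ : EdgeRanking G, (removedR G σ).card : ℕ) : ℝ) := by
    exact_mod_cast key
  push_cast at this
  linarith
end

section
/- Let G be a finite simple graph and w an injective weight function on E(G). Then the output M = ∪_{i≥0} M_i of the iterated local max algorithm is a matching of G: any two distinct edges of M have no common endpoint. -/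
/-- An edge `e` of the subgraph with edge set `E` is locally maximal in it:
`e ∈ E` and `w e > w f` for every other edge `f ∈ E` sharing an endpoint with `e`. -/
def locMaxIn {V : Type*} (w : Sym2 V → ℝ) (E : Set (Sym2 V)) (e : Sym2 V) : Prop :=
  e ∈ E ∧ ∀ f ∈ E, f ≠ e → shareEndpoint e f → w f < w e

/-- One round of the local max algorithm: remove every edge sharing an endpoint with
some locally maximal edge (including the locally maximal edges themselves). -/
def stepSet {V : Type*} (w : Sym2 V → ℝ) (E : Set (Sym2 V)) : Set (Sym2 V) :=
  {f ∈ E | ¬ ∃ e, locMaxIn w E e ∧ shareEndpoint e f}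

/-- The edge set of the graph `G_i` after `i` rounds of the local max algorithm. -/
def Eseq {V : Type*} (G : SimpleGraph V) (w : Sym2 V → ℝ) : ℕ → Set (Sym2 V)
  | 0 => G.edgeSet
  | n + 1 => stepSet w (Eseq G w n)

/-- The set `M_i` of edges matched in round `i`: the locally maximal edges of `G_i`. -/
def Mi {V : Type*} (G : SimpleGraph V) (w : Sym2 V → ℝ) (i : ℕ) : Set (Sym2 V) :=
  {e | locMaxIn w (Eseq G w i) e}

lemma Eseq_mono {V : Type*} (G : SimpleGraph V) (w : Sym2 V → ℝ) :
    ∀ {i j : ℕ}, i ≤ j → Eseq G w j ⊆ Eseq G w i := by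
  intro i j h
  induction h with
  | refl => exact fun _ h => h
  | step _ ih => exact fun x hx => ih hx.1

lemma key {V : Type*} (G : SimpleGraph V) (w : Sym2 V → ℝ) {i j : ℕ}
    (hij : i < j) {e f : Sym2 V} (he : e ∈ Mi G w i) (hf : f ∈ Mi G w j)
    (hsh : shareEndpoint e f) : False := by
  have hfE : f ∈ Eseq G w (i + 1) := Eseq_mono G w hij hf.1
  exact hfE.2 ⟨e, he, hsh⟩

/-- For a finite simple graph `G` and an injective weight function `w`
on its edges, the output `M = ∪_{i≥0} M_i` of the iterated local max algorithm is a
matching: any two distinct edges of `M` have no common endpoint. -/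
theorem stmt8 {V : Type*} [Fintype V] (G : SimpleGraph V) (w : Sym2 V → ℝ)
    (hinj : Set.InjOn w G.edgeSet) :
    ∀ e ∈ ⋃ i, Mi G w i, ∀ f ∈ ⋃ i, Mi G w i, e ≠ f → ¬ shareEndpoint e f := by
  rintro e he f hf hne hsh
  simp only [Set.mem_iUnion] at he hf
  obtain ⟨i, hi⟩ := he
  obtain ⟨j, hj⟩ := hf
  rcases lt_trichotomy i j with h | h | h
  · exact key G w h hi hj hsh
  · subst h
    have h1 := hi.2 f hj.1 (Ne.symm hne) hsh
    have h2 := hj.2 e hi.1 hne ⟨hsh.choose, hsh.choose_spec.2, hsh.choose_spec.1⟩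
    linarith
  · exact key G w h hj hi ⟨hsh.choose, hsh.choose_spec.2, hsh.choose_spec.1⟩
end

section
/- Let G be a finite simple graph and w an injective weight function on E(G). If G_k has no edges for some k, then the output M = ∪_{i<k} M_i of the iterated local max algorithm is a maximal matching of G: M is a matching and every edge of G either belongs to M or shares an endpoint with some edge of M. -/
lemma share_symm {V : Type*} {e f : Sym2 V} (h : shareEndpoint e f) : shareEndpoint f e := by
  obtain ⟨v, h1, h2⟩ := h; exact ⟨v, h2, h1⟩

lemma share_self {V : Type*} (e : Sym2 V) : shareEndpoint e e := by
  induction e using Sym2.ind with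
  | _ a b => exact ⟨a, by simp, by simp⟩

lemma Eseq_anti {V : Type*} (G : SimpleGraph V) (w : Sym2 V → ℝ) {i j : ℕ} (h : i ≤ j) :
    Eseq G w j ⊆ Eseq G w i := by
  induction j with
  | zero => simp_all
  | succ n ih =>
    rcases Nat.lt_or_ge i (n+1) with h' | h'
    · exact fun e he => ih (Nat.lt_succ_iff.mp h') he.1
    · have : i = n + 1 := le_antisymm h h'
      subst this; exact fun e he => he

/-- If `G_k` has no edges for some `k`, then `M = ∪_{i<k} M_i` is a
maximal matching of `G`: it is a matching, and every edge of `G` either belongs to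
`M` or shares an endpoint with some edge of `M`. -/
theorem stmt9 {V : Type*} [Fintype V] (G : SimpleGraph V) (w : Sym2 V → ℝ)
    (hinj : Set.InjOn w G.edgeSet) (k : ℕ) (hk : Eseq G w k = ∅) :
    (∀ e ∈ ⋃ i < k, Mi G w i, ∀ f ∈ ⋃ i < k, Mi G w i, e ≠ f → ¬ shareEndpoint e f) ∧
    (∀ e ∈ G.edgeSet, e ∈ ⋃ i < k, Mi G w i ∨
      ∃ f ∈ ⋃ i < k, Mi G w i, shareEndpoint e f) := by
  constructor
  · rintro e he f hf hne hsh
    simp only [Set.mem_iUnion] at he hf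
    obtain ⟨i, hi, hei⟩ := he
    obtain ⟨j, hj, hfj⟩ := hf
    wlog hij : i ≤ j generalizing i j e f
    · exact this f e hne.symm (share_symm hsh) j hj hfj i hi hei (le_of_not_ge hij)
    rcases eq_or_lt_of_le hij with rfl | hij
    · have h1 := hei.2 f hfj.1 hne.symm hsh
      have h2 := hfj.2 e hei.1 hne (share_symm hsh)
      linarith
    · have hfj' : f ∈ Eseq G w (i+1) := Eseq_anti G w hij hfj.1
      exact hfj'.2 ⟨e, hei, hsh⟩
  · intro e he
    have h0 : e ∈ Eseq G w 0 := he
    have hnot : e ∉ Eseq G w k := by rw [hk]; exact Set.notMem_empty e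
    have : ∃ i < k, e ∈ Eseq G w i ∧ e ∉ Eseq G w (i+1) := by
      by_contra hcon
      push_neg at hcon
      have : ∀ i ≤ k, e ∈ Eseq G w i := by
        intro i hik
        induction i with
        | zero => exact h0
        | succ n ih =>
          exact hcon n (Nat.lt_of_succ_le hik) (ih (le_of_lt (Nat.lt_of_succ_le hik)))
      exact hnot (this k le_rfl)
    obtain ⟨i, hik, hei, hnei⟩ := this
    have : ∃ g, locMaxIn w (Eseq G w i) g ∧ shareEndpoint g e := by
      by_contra hg
      exact hnei ⟨hei, hg⟩
    obtain ⟨g, hg, hge⟩ := this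
    have hgM : g ∈ ⋃ i < k, Mi G w i := by
      simp only [Set.mem_iUnion]; exact ⟨i, hik, hg⟩
    by_cases hge' : g = e
    · left; rwa [hge'] at hgM
    · right; exact ⟨g, hgM, share_symm hge⟩
end

section
/- Let G be a finite simple graph with nonnegative edge weights w, and let M ⊆ E(G) be a matching such that every edge e ∈ E(G) \ M shares an endpoint with some edge f ∈ M with w(f) ≥ w(e). Then for every matching M' of G, Σ_{e ∈ M'} w(e) ≤ 2 · Σ_{f ∈ M} w(f). -/
/-- Let `G` be a finite simple graph with nonnegative edge weights
`w`, and let `M ⊆ E(G)` be a matching such that every edge `e ∈ E(G) \ M` shares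
an endpoint with some edge `f ∈ M` with `w f ≥ w e`. Then for every matching `M'`
of `G`, `Σ_{e ∈ M'} w e ≤ 2 · Σ_{f ∈ M} w f`. -/
theorem stmt12 {V : Type*} [Fintype V] (G : SimpleGraph V) (w : Sym2 V → ℝ)
    (hw : ∀ e ∈ G.edgeSet, 0 ≤ w e)
    (M : Finset (Sym2 V)) (hM : ↑M ⊆ G.edgeSet)
    (hmatch : ∀ e ∈ M, ∀ f ∈ M, e ≠ f → ¬ shareEndpoint e f)
    (hdom : ∀ e ∈ G.edgeSet, e ∉ M → ∃ f ∈ M, shareEndpoint e f ∧ w e ≤ w f) :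
    ∀ M' : Finset (Sym2 V), ↑M' ⊆ G.edgeSet →
      (∀ e ∈ M', ∀ f ∈ M', e ≠ f → ¬ shareEndpoint e f) →
      ∑ e ∈ M', w e ≤ 2 * ∑ f ∈ M, w f := by
  intro M' hM' hmatch'
  classical
  -- the charging map
  set φ : Sym2 V → Sym2 V := fun e =>
    if h : e ∈ M then e
    else if h2 : e ∈ G.edgeSet then (hdom e h2 h).choose else e with hφ
  have key : ∀ e ∈ M', φ e ∈ M ∧ shareEndpoint e (φ e) ∧ w e ≤ w (φ e) := by
    intro e he
    by_cases h : e ∈ M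
    · refine ⟨by simp [hφ, h], ?_, by simp [hφ, h]⟩
      induction e using Sym2.ind with
      | _ a b => exact ⟨a, by simp [hφ, h]⟩
    · have h2 : e ∈ G.edgeSet := hM' he
      have := (hdom e h2 h).choose_spec
      simp only [hφ, h, h2, dif_neg, dif_pos, not_false_iff]
      exact ⟨this.1, this.2.1, this.2.2⟩
  -- each fiber has at most 2 elements
  have fiber2 : ∀ f ∈ M, (M'.filter (fun e => φ e = f)).card ≤ 2 := by
    intro f hf
    induction f using Sym2.ind with
    | _ a b =>
      have hsub : M'.filter (fun e => φ e = s(a, b)) ⊆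
          M'.filter (fun e => a ∈ e) ∪ M'.filter (fun e => b ∈ e) := by
        intro e he
        simp only [Finset.mem_filter] at he
        obtain ⟨he', hfe⟩ := he
        obtain ⟨hm, ⟨v, hv1, hv2⟩, _⟩ := key e he'
        rw [hfe] at hv2
        rcases Sym2.mem_iff.mp hv2 with rfl | rfl
        · exact Finset.mem_union_left _ (Finset.mem_filter.mpr ⟨he', hv1⟩)
        · exact Finset.mem_union_right _ (Finset.mem_filter.mpr ⟨he', hv1⟩)
      have h1 : ∀ c : V, (M'.filter (fun e => c ∈ e)).card ≤ 1 := by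
        intro c
        refine Finset.card_le_one.mpr ?_
        intro e1 h1 e2 h2
        simp only [Finset.mem_filter] at h1 h2
        by_contra hne
        exact hmatch' e1 h1.1 e2 h2.1 hne ⟨c, h1.2, h2.2⟩
      calc (M'.filter (fun e => φ e = s(a, b))).card
          ≤ (M'.filter (fun e => a ∈ e) ∪ M'.filter (fun e => b ∈ e)).card :=
            Finset.card_le_card hsub
        _ ≤ (M'.filter (fun e => a ∈ e)).card + (M'.filter (fun e => b ∈ e)).card :=
            Finset.card_union_le _ _
        _ ≤ 2 := by have := h1 a; have := h1 b; omega
  calc ∑ e ∈ M', w e ≤ ∑ e ∈ M', w (φ e) :=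
        Finset.sum_le_sum fun e he => (key e he).2.2
    _ = ∑ f ∈ M'.image φ, (M'.filter (fun e => φ e = f)).card • w f :=
        Finset.sum_comp w φ
    _ ≤ ∑ f ∈ M, (M'.filter (fun e => φ e = f)).card • w f := by
        refine Finset.sum_le_sum_of_subset_of_nonneg ?_ ?_
        · intro f hf
          obtain ⟨e, he, rfl⟩ := Finset.mem_image.mp hf
          exact (key e he).1
        · intro f hf _
          exact nsmul_nonneg (hw f (hM hf)) _
    _ ≤ ∑ f ∈ M, 2 * w f := by
        refine Finset.sum_le_sum fun f hf => ?_
        rw [nsmul_eq_mul]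
        have := hw f (hM hf)
        have h2 := fiber2 f hf
        have h2r : ((M'.filter (fun e => φ e = f)).card : ℝ) ≤ 2 := by exact_mod_cast h2
        nlinarith [h2r]
    _ = 2 * ∑ f ∈ M, w f := (Finset.mul_sum _ _ _).symm
end
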